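/- Let χ be a bicharacter on ℤ^I with values in 𝕜∖{0}, p ∈ I and i, j ∈ I∖{p} with i ≠ j. Then in 𝒰(χ), E^+_{i,m} F^+_{j,n} = F^+_{j,n} E^+_{i,m} for all m, n ∈ ℕ₀. -/

import Mathlib

/-- The quantum integer `[n]_q = 1 + q + ⋯ + q^{n-1}` for `n ∈ ℕ`. -/
def qNat {𝕜 : Type*} [Field 𝕜] (q : 𝕜) (n : ℕ) : 𝕜 :=
  ∑ i ∈ Finset.range n, q ^ i

/-- The quantum factorial `[n]_q! = [1]_q [2]_q ⋯ [n]_q`. -/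
def qFact {𝕜 : Type*} [Field 𝕜] (q : 𝕜) (n : ℕ) : 𝕜 :=
  ∏ i ∈ Finset.range n, qNat q (i + 1)

variable {𝕜 : Type*} [Field 𝕜] {I : Type*} [Fintype I] [DecidableEq I]

/-- The standard basis vector `ε_i` of `ℤ^I`. -/
def eps (i : I) : I → ℤ := Pi.single i 1

/-- `χ : ℤ^I × ℤ^I → 𝕜∖{0}` is a bicharacter. -/
def IsBichar (χ : (I → ℤ) → (I → ℤ) → 𝕜) : Prop :=
  (∀ a b c : I → ℤ, χ (a + b) c = χ a c * χ b c) ∧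
  (∀ c a b : I → ℤ, χ c (a + b) = χ c a * χ c b) ∧
  (∀ a b : I → ℤ, χ a b ≠ 0)

/-- The generators `K_i, K_i⁻¹, L_i, L_i⁻¹, E_i, F_i` of `𝒰(χ)`. -/
inductive UGen (I : Type*) where
  | K (i : I)
  | Kinv (i : I)
  | L (i : I)
  | Linv (i : I)
  | E (i : I)
  | F (i : I)

/-- The toral generators are `K_i, K_i⁻¹, L_i, L_i⁻¹`. -/
def UGen.IsToral {I : Type*} : UGen I → Prop
  | .K _ => True
  | .Kinv _ => True
  | .L _ => True
  | .Linv _ => True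
  | _ => False

variable (𝕜) in
/-- The defining relations of the Drinfel'd double `𝒰(χ)`:
all `K_i^{±1}, L_j^{±1}` commute pairwise; `K_iK_i⁻¹ = 1 = L_iL_i⁻¹`;
`K_iE_j = q_{ij}E_jK_i`, `L_iE_j = q_{ji}⁻¹E_jL_i`, `K_iF_j = q_{ij}⁻¹F_jK_i`,
`L_iF_j = q_{ji}F_jL_i`; `E_iF_j − F_jE_i = δ_{ij}(K_i − L_i)`. -/
inductive URel (χ : (I → ℤ) → (I → ℤ) → 𝕜) :
    FreeAlgebra 𝕜 (UGen I) → FreeAlgebra 𝕜 (UGen I) → Prop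
  | comm (x y : UGen I) (hx : x.IsToral) (hy : y.IsToral) :
      URel χ (FreeAlgebra.ι 𝕜 x * FreeAlgebra.ι 𝕜 y)
        (FreeAlgebra.ι 𝕜 y * FreeAlgebra.ι 𝕜 x)
  | KKinv (i : I) :
      URel χ (FreeAlgebra.ι 𝕜 (.K i) * FreeAlgebra.ι 𝕜 (.Kinv i)) 1
  | LLinv (i : I) :
      URel χ (FreeAlgebra.ι 𝕜 (.L i) * FreeAlgebra.ι 𝕜 (.Linv i)) 1
  | KE (i j : I) :
      URel χ (FreeAlgebra.ι 𝕜 (.K i) * FreeAlgebra.ι 𝕜 (.E j))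
        (χ (eps i) (eps j) • (FreeAlgebra.ι 𝕜 (.E j) * FreeAlgebra.ι 𝕜 (.K i)))
  | LE (i j : I) :
      URel χ (FreeAlgebra.ι 𝕜 (.L i) * FreeAlgebra.ι 𝕜 (.E j))
        ((χ (eps j) (eps i))⁻¹ • (FreeAlgebra.ι 𝕜 (.E j) * FreeAlgebra.ι 𝕜 (.L i)))
  | KF (i j : I) :
      URel χ (FreeAlgebra.ι 𝕜 (.K i) * FreeAlgebra.ι 𝕜 (.F j))
        ((χ (eps i) (eps j))⁻¹ • (FreeAlgebra.ι 𝕜 (.F j) * FreeAlgebra.ι 𝕜 (.K i)))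
  | LF (i j : I) :
      URel χ (FreeAlgebra.ι 𝕜 (.L i) * FreeAlgebra.ι 𝕜 (.F j))
        (χ (eps j) (eps i) • (FreeAlgebra.ι 𝕜 (.F j) * FreeAlgebra.ι 𝕜 (.L i)))
  | EF (i j : I) :
      URel χ (FreeAlgebra.ι 𝕜 (.E i) * FreeAlgebra.ι 𝕜 (.F j) -
          FreeAlgebra.ι 𝕜 (.F j) * FreeAlgebra.ι 𝕜 (.E i))
        (if i = j then FreeAlgebra.ι 𝕜 (.K i) - FreeAlgebra.ι 𝕜 (.L i) else 0)

/-- The Drinfel'd double `𝒰(χ)`, presented by generators and relations. -/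
abbrev UAlg (χ : (I → ℤ) → (I → ℤ) → 𝕜) : Type _ := RingQuot (URel 𝕜 χ)

variable (χ : (I → ℤ) → (I → ℤ) → 𝕜)

/-- The canonical projection from the free algebra onto `𝒰(χ)`. -/
noncomputable def mkU : FreeAlgebra 𝕜 (UGen I) →ₐ[𝕜] UAlg χ :=
  RingQuot.mkAlgHom 𝕜 (URel 𝕜 χ)

/-- The generator `K_i` of `𝒰(χ)`. -/
noncomputable def uK (i : I) : UAlg χ := mkU χ (FreeAlgebra.ι 𝕜 (.K i))
/-- The generator `K_i⁻¹` of `𝒰(χ)`. -/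
noncomputable def uKinv (i : I) : UAlg χ := mkU χ (FreeAlgebra.ι 𝕜 (.Kinv i))
/-- The generator `L_i` of `𝒰(χ)`. -/
noncomputable def uL (i : I) : UAlg χ := mkU χ (FreeAlgebra.ι 𝕜 (.L i))
/-- The generator `L_i⁻¹` of `𝒰(χ)`. -/
noncomputable def uLinv (i : I) : UAlg χ := mkU χ (FreeAlgebra.ι 𝕜 (.Linv i))
/-- The generator `E_i` of `𝒰(χ)`. -/
noncomputable def uE (i : I) : UAlg χ := mkU χ (FreeAlgebra.ι 𝕜 (.E i))
/-- The generator `F_i` of `𝒰(χ)`. -/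
noncomputable def uF (i : I) : UAlg χ := mkU χ (FreeAlgebra.ι 𝕜 (.F i))

/-- The general recursion `Y_0 = Y`, `Y_{m+1} = X Y_m − α β^m Y_m X`; with
`X = E_p`, `Y = E_i`, `α = q_{pi}`, `β = q_{pp}` this gives `E^+_{i,m}`, and
with `X = F_p`, `Y = F_j`, `α = q_{jp}`, `β = q_{pp}` it gives `F^+_{j,m}`. -/
def recE {A : Type*} [Ring A] [Algebra 𝕜 A] (α β : 𝕜) (X Y : A) : ℕ → A
  | 0 => Y
  | m + 1 => X * recE α β X Y m - (α * β ^ m) • (recE α β X Y m * X)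


section AuxGeneric
variable {A : Type*} [Ring A] [Algebra 𝕜 A]

lemma recE_succ (α β : 𝕜) (X Y : A) (m : ℕ) :
    recE α β X Y (m + 1)
      = X * recE α β X Y m - (α * β ^ m) • (recE α β X Y m * X) := rfl

lemma comm_recE (α β : 𝕜) (X Y G : A) (hX : G * X = X * G) (hY : G * Y = Y * G) :
    ∀ m, G * recE α β X Y m = recE α β X Y m * G
  | 0 => hY
  | (m + 1) => by
    have ih := comm_recE α β X Y G hX hY m
    have h1 : G * (X * recE α β X Y m) = X * recE α β X Y m * G := by
      rw [← mul_assoc, hX, mul_assoc, ih, ← mul_assoc]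
    have h2 : G * (recE α β X Y m * X) = recE α β X Y m * X * G := by
      rw [← mul_assoc, ih, mul_assoc, hX, ← mul_assoc]
    rw [recE_succ, mul_sub, sub_mul, h1, mul_smul_comm, h2, smul_mul_assoc]

lemma toral_recE (α β : 𝕜) (X Y G : A) (r s : 𝕜)
    (hX : G * X = r • (X * G)) (hY : G * Y = s • (Y * G)) :
    ∀ m, G * recE α β X Y m = (s * r ^ m) • (recE α β X Y m * G)
  | 0 => by simpa [recE] using hY
  | (m + 1) => by
    have ih := toral_recE α β X Y G r s hX hY m
    have h1 : G * (X * recE α β X Y m) = (r * (s * r ^ m)) • (X * recE α β X Y m * G) := by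
      rw [← mul_assoc, hX, smul_mul_assoc, mul_assoc, ih, mul_smul_comm, smul_smul]
      conv_rhs => rw [mul_assoc]
    have h2 : G * (recE α β X Y m * X) = (s * (r ^ m * r)) • (recE α β X Y m * X * G) := by
      rw [← mul_assoc, ih, smul_mul_assoc, mul_assoc, hX, mul_smul_comm, smul_smul]
      conv_rhs => rw [mul_assoc]
      module
    rw [recE_succ, mul_sub, sub_mul, h1, mul_smul_comm, h2, smul_smul, smul_sub,
      smul_mul_assoc, smul_smul]
    module

end AuxGeneric

section AuxRel

lemma mkU_rel {x y : FreeAlgebra 𝕜 (UGen I)} (h : URel 𝕜 χ x y) :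
    mkU χ x = mkU χ y :=
  RingQuot.mkAlgHom_rel 𝕜 h

lemma rel_EF (a b : I) :
    uE χ a * uF χ b - uF χ b * uE χ a
      = if a = b then uK χ a - uL χ a else 0 := by
  have h := mkU_rel χ (URel.EF a b)
  rw [map_sub, map_mul, map_mul, apply_ite (mkU χ), map_sub, map_zero] at h
  exact h

lemma EF_comm {a b : I} (h : a ≠ b) : uE χ a * uF χ b = uF χ b * uE χ a := by
  have := rel_EF χ a b
  rw [if_neg h] at this
  exact sub_eq_zero.mp this

lemma EF_same (a : I) :
    uE χ a * uF χ a = uF χ a * uE χ a + (uK χ a - uL χ a) := by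
  have := rel_EF χ a a
  rw [if_pos rfl] at this
  linear_combination (norm := noncomm_ring) this

lemma rel_KE (a b : I) :
    uK χ a * uE χ b = χ (eps a) (eps b) • (uE χ b * uK χ a) := by
  have h := mkU_rel χ (URel.KE (𝕜 := 𝕜) a b)
  rw [map_mul, map_smul, map_mul] at h
  exact h

lemma rel_LE (a b : I) :
    uL χ a * uE χ b = (χ (eps b) (eps a))⁻¹ • (uE χ b * uL χ a) := by
  have h := mkU_rel χ (URel.LE (𝕜 := 𝕜) a b)
  rw [map_mul, map_smul, map_mul] at h
  exact h

lemma rel_KF (a b : I) :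
    uK χ a * uF χ b = (χ (eps a) (eps b))⁻¹ • (uF χ b * uK χ a) := by
  have h := mkU_rel χ (URel.KF (𝕜 := 𝕜) a b)
  rw [map_mul, map_smul, map_mul] at h
  exact h

lemma rel_LF (a b : I) :
    uL χ a * uF χ b = χ (eps b) (eps a) • (uF χ b * uL χ a) := by
  have h := mkU_rel χ (URel.LF (𝕜 := 𝕜) a b)
  rw [map_mul, map_smul, map_mul] at h
  exact h

end AuxRel


section AuxMain

lemma recE_zero {A : Type*} [Ring A] [Algebra 𝕜 A] (α β : 𝕜) (X Y : A) :
    recE α β X Y 0 = Y := rfl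

lemma shape_step {A : Type*} [Ring A] [Algebra 𝕜 A] (E Z Lp : A) (t lam lam' q d : 𝕜)
    (hlam : lam' = lam * q) (hq : q ≠ 0)
    (h1 : Z * Lp * E = q⁻¹ • (Z * E * Lp)) :
    E * (t • (Z * Lp)) - lam' • (t • (Z * Lp) * E)
        + d • ((E * Z - lam • (Z * E)) * Lp)
      = (t + d) • ((E * Z - lam • (Z * E)) * Lp) := by
  subst hlam
  rw [smul_mul_assoc, h1, mul_smul_comm, ← mul_assoc, smul_smul, smul_smul]
  have hs : lam * q * t * q⁻¹ = t * lam := by field_simp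
  rw [hs, sub_mul, smul_mul_assoc]
  module

/-- Recurrence for the commutator `c_{m+1} = [E^+_{i,m+1}, F_p]`. -/
lemma cRec (p i : I) (m : ℕ) :
    recE (χ (eps p) (eps i)) (χ (eps p) (eps p)) (uE χ p) (uE χ i) (m + 1) * uF χ p
        - uF χ p * recE (χ (eps p) (eps i)) (χ (eps p) (eps p)) (uE χ p) (uE χ i) (m + 1)
      = uE χ p * (recE (χ (eps p) (eps i)) (χ (eps p) (eps p)) (uE χ p) (uE χ i) m * uF χ p
            - uF χ p * recE (χ (eps p) (eps i)) (χ (eps p) (eps p)) (uE χ p) (uE χ i) m)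
        - (χ (eps p) (eps i) * χ (eps p) (eps p) ^ m) •
            ((recE (χ (eps p) (eps i)) (χ (eps p) (eps p)) (uE χ p) (uE χ i) m * uF χ p
              - uF χ p * recE (χ (eps p) (eps i)) (χ (eps p) (eps p)) (uE χ p) (uE χ i) m)
              * uE χ p)
        + (χ (eps p) (eps i) * χ (eps p) (eps p) ^ m
            - (χ (eps i) (eps p))⁻¹ * ((χ (eps p) (eps p))⁻¹) ^ m) •
            (recE (χ (eps p) (eps i)) (χ (eps p) (eps p)) (uE χ p) (uE χ i) m * uL χ p) := by
  rw [recE_succ]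
  set E := uE χ p with hE
  set Fp := uF χ p with hFp
  set K := uK χ p with hK
  set Lp := uL χ p with hLp
  set Z := recE (χ (eps p) (eps i)) (χ (eps p) (eps p)) (uE χ p) (uE χ i) m with hZdef
  set lam := χ (eps p) (eps i) * χ (eps p) (eps p) ^ m with hlam
  set nu := (χ (eps i) (eps p))⁻¹ * ((χ (eps p) (eps p))⁻¹) ^ m with hnu
  have hEF : E * Fp = Fp * E + (K - Lp) := EF_same χ p
  have hKZ : K * Z = lam • (Z * K) :=
    toral_recE _ _ _ _ _ _ _ (rel_KE χ p p) (rel_KE χ p i) m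
  have hLZ : Lp * Z = nu • (Z * Lp) :=
    toral_recE _ _ _ _ _ _ _ (rel_LE χ p p) (rel_LE χ p i) m
  have hFE : Fp * E = E * Fp - (K - Lp) := by rw [hEF]; abel
  have hB : Fp * E * Z = E * (Fp * Z) - lam • (Z * K) + nu • (Z * Lp) := by
    rw [hFE, sub_mul, sub_mul, hKZ, hLZ, mul_assoc]
    abel
  have hA : Z * (E * Fp) = Z * (Fp * E) + Z * K - Z * Lp := by
    rw [hEF, mul_add, mul_sub]
    abel
  rw [sub_mul, mul_sub, smul_mul_assoc, mul_smul_comm,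
    mul_assoc E Z Fp, mul_assoc Z E Fp, hA, ← mul_assoc Fp E Z, hB,
    ← mul_assoc Fp Z E, mul_sub E, sub_mul, smul_sub, mul_assoc Z Fp E]
  module

/-- Shape of the commutator: `[E^+_{i,m+1}, F_p] = t • E^+_{i,m} L_p`. -/
lemma cShape (hχ : IsBichar χ) (p i : I) (hip : i ≠ p) :
    ∀ m : ℕ, ∃ t : 𝕜,
      recE (χ (eps p) (eps i)) (χ (eps p) (eps p)) (uE χ p) (uE χ i) (m + 1) * uF χ p
          - uF χ p * recE (χ (eps p) (eps i)) (χ (eps p) (eps p)) (uE χ p) (uE χ i) (m + 1)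
        = t • (recE (χ (eps p) (eps i)) (χ (eps p) (eps p)) (uE χ p) (uE χ i) m * uL χ p)
  | 0 => by
    refine ⟨χ (eps p) (eps i) * χ (eps p) (eps p) ^ 0
      - (χ (eps i) (eps p))⁻¹ * ((χ (eps p) (eps p))⁻¹) ^ 0, ?_⟩
    have h0 : recE (χ (eps p) (eps i)) (χ (eps p) (eps p)) (uE χ p) (uE χ i) 0 * uF χ p
        - uF χ p * recE (χ (eps p) (eps i)) (χ (eps p) (eps p)) (uE χ p) (uE χ i) 0 = 0 := by
      rw [recE_zero, sub_eq_zero]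
      exact EF_comm χ hip
    rw [cRec χ p i 0, h0, mul_zero, zero_mul, smul_zero, sub_zero, zero_add]
  | (m + 1) => by
    obtain ⟨t, ht⟩ := cShape hχ p i hip m
    refine ⟨t + (χ (eps p) (eps i) * χ (eps p) (eps p) ^ (m + 1)
      - (χ (eps i) (eps p))⁻¹ * ((χ (eps p) (eps p))⁻¹) ^ (m + 1)), ?_⟩
    have hq : χ (eps p) (eps p) ≠ 0 := hχ.2.2 _ _
    have hLE : uL χ p * uE χ p = (χ (eps p) (eps p))⁻¹ • (uE χ p * uL χ p) := rel_LE χ p p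
    have h1 : recE (χ (eps p) (eps i)) (χ (eps p) (eps p)) (uE χ p) (uE χ i) m * uL χ p *
          uE χ p
        = (χ (eps p) (eps p))⁻¹ •
            (recE (χ (eps p) (eps i)) (χ (eps p) (eps p)) (uE χ p) (uE χ i) m * uE χ p *
              uL χ p) := by
      rw [mul_assoc, hLE, mul_smul_comm, ← mul_assoc]
    rw [cRec χ p i (m + 1), ht, recE_succ]
    exact shape_step _ _ _ t _ _ _ _ (by rw [pow_succ, mul_assoc]) hq h1

/-- The key commutation, proved by double induction. -/
lemma main_aux (hχ : IsBichar χ) (p i j : I)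
    (hip : i ≠ p) (hjp : j ≠ p) (hij : i ≠ j) : ∀ m n : ℕ,
    recE (χ (eps p) (eps i)) (χ (eps p) (eps p)) (uE χ p) (uE χ i) m *
        recE (χ (eps j) (eps p)) (χ (eps p) (eps p)) (uF χ p) (uF χ j) n =
      recE (χ (eps j) (eps p)) (χ (eps p) (eps p)) (uF χ p) (uF χ j) n *
        recE (χ (eps p) (eps i)) (χ (eps p) (eps p)) (uE χ p) (uE χ i) m := by
  intro m
  induction m with
  | zero =>
    intro n
    exact comm_recE _ _ _ _ _ (EF_comm χ hip) (EF_comm χ hij) n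
  | succ m ihm =>
    intro n
    induction n with
    | zero =>
      exact (comm_recE _ _ _ _ _ (EF_comm χ (Ne.symm hjp)).symm
        (EF_comm χ hij).symm (m + 1)).symm
    | succ n ihn =>
      obtain ⟨t, ht⟩ := cShape χ hχ p i hip m
      set E1 := recE (χ (eps p) (eps i)) (χ (eps p) (eps p)) (uE χ p) (uE χ i) (m + 1)
        with hE1
      set Z := recE (χ (eps p) (eps i)) (χ (eps p) (eps p)) (uE χ p) (uE χ i) m with hZdef
      set W := recE (χ (eps j) (eps p)) (χ (eps p) (eps p)) (uF χ p) (uF χ j) n with hWdef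
      set Fp := uF χ p with hFp
      set Lp := uL χ p with hLp
      set mu := χ (eps j) (eps p) * χ (eps p) (eps p) ^ n with hmu
      have hZFp : E1 * Fp = Fp * E1 + t • (Z * Lp) := by
        rw [← ht]; abel
      have hLW : Lp * W = mu • (W * Lp) :=
        toral_recE _ _ _ _ _ _ _ (rel_LF χ p p) (rel_LF χ p j) n
      have hZW : Z * W = W * Z := ihm n
      show E1 * (Fp * W - (χ (eps j) (eps p) * χ (eps p) (eps p) ^ n) • (W * Fp))
          = (Fp * W - (χ (eps j) (eps p) * χ (eps p) (eps p) ^ n) • (W * Fp)) * E1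
      rw [← hmu]
      have h1 : E1 * (Fp * W) = Fp * (W * E1) + (t * mu) • (W * (Z * Lp)) := by
        rw [← mul_assoc, hZFp, add_mul, smul_mul_assoc, mul_assoc Z Lp W, hLW,
          mul_smul_comm, smul_smul, mul_assoc, ihn, ← mul_assoc Z W Lp, hZW,
          mul_assoc W Z Lp, ← mul_assoc Fp W E1, mul_assoc Fp W E1]
      have h2 : E1 * (W * Fp) = W * (Fp * E1) + t • (W * (Z * Lp)) := by
        rw [← mul_assoc, ihn, mul_assoc, hZFp, mul_add, mul_smul_comm]
      rw [mul_sub, sub_mul, h1, mul_smul_comm, h2, smul_add, smul_smul,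
        smul_mul_assoc, mul_assoc Fp W E1, mul_assoc W Fp E1]
      module

end AuxMain

/-- Lemma (le:E+F+2): for `i, j ∈ I∖{p}` with `i ≠ j`, the elements
`E^+_{i,m}` and `F^+_{j,n}` of `𝒰(χ)` commute. -/
theorem Eplus_commute_Fplus (hχ : IsBichar χ) (p i j : I)
    (hip : i ≠ p) (hjp : j ≠ p) (hij : i ≠ j) (m n : ℕ) :
    recE (χ (eps p) (eps i)) (χ (eps p) (eps p)) (uE χ p) (uE χ i) m *
        recE (χ (eps j) (eps p)) (χ (eps p) (eps p)) (uF χ p) (uF χ j) n =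
      recE (χ (eps j) (eps p)) (χ (eps p) (eps p)) (uF χ p) (uF χ j) n *
        recE (χ (eps p) (eps i)) (χ (eps p) (eps p)) (uE χ p) (uE χ i) m :=
  main_aux χ hχ p i j hip hjp hij m n
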